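/- If a connected μ-uniform graph Γ has an (R,r)-decomposition (R a positive integer, r > 0), then h(Γ) ≥ r²(μ−1) / ((μ^{R+1}−1)(μ+r)² + 2rμ(μ−1)). -/

import Mathlib

open scoped ENNReal

namespace TreePaper

variable {V ι : Type*}

/-- The (outer) vertex boundary `∂A = {w : d(w,A) = 1}` of a set of vertices. -/
def vboundary (G : SimpleGraph V) (A : Set V) : Set V :=
  {w | w ∉ A ∧ ∃ a ∈ A, G.Adj w a}

/-- The ratio `|∂A| / |A|`, valued in `ℝ≥0∞`. -/
noncomputable def eratio (G : SimpleGraph V) (A : Finset V) : ℝ≥0∞ :=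
  ((vboundary G (A : Set V)).encard : ℝ≥0∞) / (A.card : ℝ≥0∞)

/-- The Cheeger isoperimetric constant `h(Γ) = inf_A |∂A|/|A|`. -/
noncomputable def cheeger (G : SimpleGraph V) : ℝ≥0∞ :=
  ⨅ (A : Finset V) (_ : A.Nonempty), eratio G A

/-- `V_s = Γ_s ∩ (∪_{t ∈ S₁} Γ_t)`. -/
def Vs (G : SimpleGraph V) (Γ : ι → G.Subgraph) (S₁ : Set ι) (s : ι) : Set V :=
  (Γ s).verts ∩ ⋃ t ∈ S₁, (Γ t).verts

/-- `W_s = ∪_{v ∈ V_s} B̄_{Γ_s}(v,R)`, closed balls taken in the graph metric of `Γ_s`. -/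
def Ws (G : SimpleGraph V) (Γ : ι → G.Subgraph) (S₁ : Set ι) (R : ℕ) (s : ι) : Set V :=
  {u : V | ∃ hu : u ∈ (Γ s).verts, ∃ w : (Γ s).verts, (w : V) ∈ Vs G Γ S₁ s ∧
    (Γ s).coe.Reachable ⟨u, hu⟩ w ∧ (Γ s).coe.dist ⟨u, hu⟩ w ≤ R}

/-- The subgraph of `Γ_s` induced by `V(Γ_s) ∖ W_s`. -/
def rest (G : SimpleGraph V) (Γ : ι → G.Subgraph) (S₁ : Set ι) (R : ℕ) (s : ι) :
    SimpleGraph {u : (Γ s).verts // (u : V) ∉ Ws G Γ S₁ R s} :=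
  (Γ s).coe.induce {u : (Γ s).verts | (u : V) ∉ Ws G Γ S₁ R s}

/-! ### Auxiliary lemmas -/

private lemma toENNReal_sum {α : Type*} (T : Finset α) (f : α → ℕ∞) :
    ((∑ a ∈ T, f a : ℕ∞) : ℝ≥0∞) = ∑ a ∈ T, ((f a : ℕ∞) : ℝ≥0∞) :=
  map_sum ENat.toENNRealRingHom f T

private lemma encard_biUnion_le {α γ : Type*} (T : Finset α) (f : α → Set γ) :
    (⋃ a ∈ T, f a).encard ≤ ∑ a ∈ T, (f a).encard := by
  classical
  induction T using Finset.induction_on with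
  | empty => simp
  | insert _ _ ha ih =>
    rename_i a s
    rw [Finset.set_biUnion_insert, Finset.sum_insert ha]
    exact le_trans (Set.encard_union_le _ _) (add_le_add_right ih _)

private lemma sum_encard_le {α γ : Type*} (T : Finset α) (D : α → Set γ) (F : Set γ)
    (hsub : ∀ a ∈ T, D a ⊆ F)
    (hdisj : ∀ a ∈ T, ∀ b ∈ T, a ≠ b → Disjoint (D a) (D b)) :
    ∑ a ∈ T, (D a).encard ≤ F.encard := by
  classical
  induction T using Finset.induction_on generalizing F with
  | empty => simp
  | insert _ _ ha ih =>
    rename_i a s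
    rw [Finset.sum_insert ha]
    have h1 : D a ⊆ F := hsub a (Finset.mem_insert_self _ _)
    have h2 : ∑ b ∈ s, (D b).encard ≤ (F \ D a).encard := by
      refine ih _ (fun b hb => Set.subset_diff.mpr ⟨hsub b (Finset.mem_insert_of_mem hb), ?_⟩)
        (fun x hx y hy hxy => hdisj x (Finset.mem_insert_of_mem hx) y
          (Finset.mem_insert_of_mem hy) hxy)
      exact hdisj b (Finset.mem_insert_of_mem hb) a (Finset.mem_insert_self _ _)
        (fun h => ha (h ▸ hb))
    calc (D a).encard + ∑ b ∈ s, (D b).encard ≤ (D a).encard + (F \ D a).encard :=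
          add_le_add_right h2 _
      _ = F.encard := by rw [add_comm]; exact Set.encard_diff_add_encard_of_subset h1

private lemma exists_boundary {G : SimpleGraph V} {A : Set V} :
    ∀ {a v : V} (p : G.Walk a v), a ∈ A → v ∉ A →
      ∃ b ∈ vboundary G A, ∃ q : G.Walk a b, q.length ≤ p.length := by
  intro a v p
  induction p with
  | nil => intro ha hv; exact absurd ha hv
  | @cons u x w h p ih =>
    intro ha hv
    by_cases hx : x ∈ A
    · obtain ⟨b, hb, q, hq⟩ := ih hx hv
      exact ⟨b, hb, .cons h q, by simp only [SimpleGraph.Walk.length_cons]; omega⟩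
    · exact ⟨x, ⟨hx, u, ha, h.symm⟩, .cons h .nil, by simp⟩

private def gball (G : SimpleGraph V) (S : Set V) (n : ℕ) : Set V :=
  {v | ∃ a ∈ S, ∃ w : G.Walk v a, w.length ≤ n}

private lemma subset_gball (G : SimpleGraph V) (S : Set V) (n : ℕ) : S ⊆ gball G S n :=
  fun v hv => ⟨v, hv, .nil, by simp⟩

private lemma gball_zero (G : SimpleGraph V) (S : Set V) : gball G S 0 = S := by
  refine le_antisymm ?_ (subset_gball G S 0)
  rintro v ⟨a, ha, w, hw⟩
  have := SimpleGraph.Walk.eq_of_length_eq_zero (Nat.le_zero.mp hw)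
  exact this ▸ ha

private def sph (G : SimpleGraph V) (S : Set V) : ℕ → Set V
  | 0 => S
  | n+1 => gball G S (n+1) \ gball G S n

private lemma gball_subset_sph (G : SimpleGraph V) (S : Set V) (n : ℕ) :
    gball G S n ⊆ ⋃ i ∈ Finset.range (n+1), sph G S i := by
  induction n with
  | zero =>
    rw [gball_zero]; intro v hv
    simp only [Set.mem_iUnion, Finset.mem_range]
    exact ⟨0, by omega, hv⟩
  | succ n ih =>
    intro v hv
    simp only [Set.mem_iUnion, Finset.mem_range]
    by_cases h : v ∈ gball G S n
    · obtain ⟨i, hi, hvi⟩ := by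
        simpa only [Set.mem_iUnion, Finset.mem_range] using ih h
      exact ⟨i, by omega, hvi⟩
    · exact ⟨n+1, by omega, ⟨hv, h⟩⟩

private lemma sph_succ_subset (G : SimpleGraph V) (S : Set V) (n : ℕ) :
    sph G S (n+1) ⊆ ⋃ u ∈ sph G S n, G.neighborSet u := by
  rintro v ⟨⟨a, ha, p, hp⟩, hnot⟩
  cases p with
  | nil => exact absurd (subset_gball G S n ha) hnot
  | @cons _ u _ h q =>
    rw [SimpleGraph.Walk.length_cons] at hp
    have hu : u ∈ gball G S n := ⟨a, ha, q, by omega⟩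
    have husph : u ∈ sph G S n := by
      cases n with
      | zero => rwa [gball_zero] at hu
      | succ k =>
        refine ⟨hu, fun hk => hnot ?_⟩
        obtain ⟨a', ha', q', hq'⟩ := hk
        exact ⟨a', ha', .cons h q', by simp only [SimpleGraph.Walk.length_cons]; omega⟩
    exact Set.mem_biUnion husph h.symm

private lemma encard_sph_le {G : SimpleGraph V} {μ : ℕ}
    (hμ : ∀ x : V, (G.neighborSet x).encard ≤ μ) {S : Set V} (hS : S.Finite) :
    ∀ n, (sph G S n).encard ≤ (μ : ℕ∞) ^ n * S.encard := by
  intro n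
  induction n with
  | zero => simp [sph]
  | succ n ih =>
    have hne : ((μ : ℕ∞) ^ n * S.encard) ≠ ⊤ := by
      refine WithTop.mul_ne_top ?_ hS.encard_lt_top.ne
      rw [← Nat.cast_pow]
      exact ENat.coe_ne_top _
    have hfin : (sph G S n).Finite := by
      rw [← Set.encard_ne_top_iff]
      intro h; rw [h] at ih; exact hne (top_le_iff.mp ih)
    calc (sph G S (n+1)).encard
        ≤ (⋃ u ∈ hfin.toFinset, G.neighborSet u).encard := by
          refine Set.encard_le_encard (le_trans (sph_succ_subset G S n) ?_)
          intro x hx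
          simp only [Set.mem_iUnion] at hx ⊢
          obtain ⟨u, hu, hx⟩ := hx
          exact ⟨u, hfin.mem_toFinset.mpr hu, hx⟩
      _ ≤ ∑ u ∈ hfin.toFinset, (G.neighborSet u).encard := encard_biUnion_le _ _
      _ ≤ ∑ _u ∈ hfin.toFinset, (μ : ℕ∞) := Finset.sum_le_sum (fun u _ => hμ u)
      _ = (hfin.toFinset.card : ℕ∞) * μ := by rw [Finset.sum_const, nsmul_eq_mul]
      _ = (sph G S n).encard * μ := by rw [hfin.encard_eq_coe_toFinset_card]
      _ ≤ ((μ : ℕ∞) ^ n * S.encard) * μ := mul_le_mul_left ih _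
      _ = (μ : ℕ∞) ^ (n+1) * S.encard := by rw [mul_right_comm, ← pow_succ]

private lemma encard_gball_le {G : SimpleGraph V} {μ : ℕ}
    (hμ : ∀ x : V, (G.neighborSet x).encard ≤ μ) {S : Set V} (hS : S.Finite) (n : ℕ) :
    (gball G S n).encard ≤ (∑ i ∈ Finset.range (n+1), (μ : ℕ∞) ^ i) * S.encard := by
  calc (gball G S n).encard
      ≤ (⋃ i ∈ Finset.range (n+1), sph G S i).encard :=
        Set.encard_le_encard (gball_subset_sph G S n)
    _ ≤ ∑ i ∈ Finset.range (n+1), (sph G S i).encard := encard_biUnion_le _ _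
    _ ≤ ∑ i ∈ Finset.range (n+1), (μ : ℕ∞) ^ i * S.encard :=
        Finset.sum_le_sum (fun i _ => encard_sph_le hμ hS i)
    _ = (∑ i ∈ Finset.range (n+1), (μ : ℕ∞) ^ i) * S.encard := by
        rw [Finset.sum_mul]

private lemma expansion {W : Type*} (H : SimpleGraph W) {r : ℝ}
    (h : ENNReal.ofReal r ≤ cheeger H) {S : Set W} (hfin : S.Finite) (hne : S.Nonempty) :
    ENNReal.ofReal r * (S.encard : ℝ≥0∞) ≤ ((vboundary H S).encard : ℝ≥0∞) := by
  have hne' : hfin.toFinset.Nonempty := by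
    obtain ⟨x, hx⟩ := hne; exact ⟨x, hfin.mem_toFinset.mpr hx⟩
  have h2 : ENNReal.ofReal r ≤ eratio H hfin.toFinset :=
    le_trans h (iInf₂_le _ hne')
  rw [eratio, Set.Finite.coe_toFinset] at h2
  rw [ENNReal.le_div_iff_mul_le (Or.inl ?_) (Or.inl ?_)] at h2
  · rw [hfin.encard_eq_coe_toFinset_card]
    simpa using h2
  · exact Nat.cast_ne_zero.mpr hne'.card_pos.ne'
  · exact ENNReal.natCast_ne_top _

private lemma real_key {μ r : ℝ} {R : ℕ} (hμ : 2 ≤ μ) (hr : 0 < r) :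
    r ^ 2 * (μ - 1) / ((μ ^ (R + 1) - 1) * (μ + r) ^ 2 + 2 * r * μ * (μ - 1)) *
      (r * (2 * μ + (∑ i ∈ Finset.range (R + 1), μ ^ i) * (r + μ))) ≤ r ^ 2 := by
  set β := ∑ i ∈ Finset.range (R+1), μ ^ i with hβ
  have hβ1 : 1 ≤ β := by
    rw [hβ]
    calc (1:ℝ) = μ ^ 0 := by norm_num
      _ ≤ ∑ i ∈ Finset.range (R+1), μ ^ i :=
        Finset.single_le_sum (f := fun i => μ ^ i)
          (fun i _ => by positivity) (by simp)
  have hgeom : μ ^ (R+1) - 1 = β * (μ - 1) := (geom_sum_mul μ (R+1)).symm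
  rw [hgeom]
  have hμ1 : (0:ℝ) < μ - 1 := by linarith
  have hμ0 : (0:ℝ) < μ := by linarith
  have hD : 0 < β * (μ - 1) * (μ + r) ^ 2 + 2 * r * μ * (μ - 1) := by
    have h1 : 0 < β * (μ - 1) * (μ + r) ^ 2 :=
      mul_pos (mul_pos (by linarith) hμ1) (pow_pos (by linarith) 2)
    have h2 : 0 < 2 * r * μ * (μ - 1) := by positivity
    linarith
  rw [div_mul_eq_mul_div, div_le_iff₀ hD]
  have hstep : r * (2 * μ + β * (r + μ)) ≤ β * (μ + r) ^ 2 + 2 * r * μ := by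
    have h0 : 0 ≤ β * (μ ^ 2 + μ * r) := by positivity
    nlinarith
  calc r ^ 2 * (μ - 1) * (r * (2 * μ + β * (r + μ)))
      ≤ r ^ 2 * (μ - 1) * (β * (μ + r) ^ 2 + 2 * r * μ) := by
        refine mul_le_mul_of_nonneg_left hstep ?_
        positivity
    _ = r ^ 2 * (β * (μ - 1) * (μ + r) ^ 2 + 2 * r * μ * (μ - 1)) := by ring

private lemma encard_F_le {G : SimpleGraph V} {μ : ℕ}
    (hμ : ∀ x : V, (G.neighborSet x).encard ≤ μ) (A : Finset V)
    (hBfin : (vboundary G (A : Set V)).Finite) :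
    ({p : V × V | p.1 ∉ (A : Set V) ∧ p.2 ∈ (A : Set V) ∧ G.Adj p.1 p.2}).encard ≤
      (μ : ℕ∞) * (vboundary G (A : Set V)).encard := by
  classical
  have hsub : {p : V × V | p.1 ∉ (A : Set V) ∧ p.2 ∈ (A : Set V) ∧ G.Adj p.1 p.2} ⊆
      ⋃ b ∈ hBfin.toFinset, (fun y => (b, y)) '' (G.neighborSet b) := by
    rintro ⟨x, y⟩ ⟨hx, hy, hadj⟩
    have hxB : x ∈ vboundary G (A : Set V) := ⟨hx, y, hy, hadj⟩
    simp only [Set.mem_iUnion]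
    exact ⟨x, hBfin.mem_toFinset.mpr hxB, y, hadj, rfl⟩
  calc ({p : V × V | p.1 ∉ (A : Set V) ∧ p.2 ∈ (A : Set V) ∧ G.Adj p.1 p.2}).encard
      ≤ (⋃ b ∈ hBfin.toFinset, (fun y => (b, y)) '' (G.neighborSet b)).encard :=
        Set.encard_le_encard hsub
    _ ≤ ∑ b ∈ hBfin.toFinset, ((fun y => (b, y)) '' (G.neighborSet b)).encard :=
        encard_biUnion_le _ _
    _ ≤ ∑ _b ∈ hBfin.toFinset, (μ : ℕ∞) := by
        refine Finset.sum_le_sum (fun b _ => ?_)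
        rw [Function.Injective.encard_image (fun y z h => by simpa using congrArg Prod.snd h)]
        exact hμ b
    _ = (hBfin.toFinset.card : ℕ∞) * μ := by rw [Finset.sum_const, nsmul_eq_mul]
    _ = (vboundary G (A : Set V)).encard * μ := by rw [hBfin.encard_eq_coe_toFinset_card]
    _ = (μ : ℕ∞) * (vboundary G (A : Set V)).encard := mul_comm _ _

private lemma key1 {G : SimpleGraph V} {Γ : ι → G.Subgraph} {S₁ : Set ι} {r : ℝ}
    (h31 : ∀ s ∈ S₁, ENNReal.ofReal r ≤ cheeger (Γ s).coe)
    (hint : ∀ s t : ι, s ≠ t → ∀ x y : V, ¬(Γ s ⊓ Γ t).Adj x y)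
    (A : Finset V) :
    ENNReal.ofReal r * (((A : Set V) ∩ ⋃ t ∈ S₁, (Γ t).verts).encard : ℝ≥0∞) ≤
      (({p : V × V | p.1 ∉ (A : Set V) ∧ p.2 ∈ (A : Set V) ∧ G.Adj p.1 p.2}).encard : ℝ≥0∞) := by
  classical
  set F : Set (V × V) := {p | p.1 ∉ (A : Set V) ∧ p.2 ∈ (A : Set V) ∧ G.Adj p.1 p.2} with hFdef
  set Dset : ι → Set (V × V) :=
    fun t => {p | p.1 ∉ (A : Set V) ∧ p.2 ∈ (A : Set V) ∧ (Γ t).Adj p.1 p.2} with hDset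
  have hDsub : ∀ t, Dset t ⊆ F := by
    rintro t p ⟨h1, h2, h3⟩; exact ⟨h1, h2, h3.adj_sub⟩
  have hDdisj : ∀ t t', t ≠ t' → Disjoint (Dset t) (Dset t') := by
    intro t t' hne
    rw [Set.disjoint_left]
    rintro p ⟨h1, h2, h3⟩ ⟨h1', h2', h3'⟩
    exact hint t t' hne p.1 p.2 (SimpleGraph.Subgraph.inf_adj.mpr ⟨h3, h3'⟩)
  set A1f : Finset V := A.filter (fun a => a ∈ ⋃ t ∈ S₁, (Γ t).verts) with hA1f
  have hA1coe : (A : Set V) ∩ (⋃ t ∈ S₁, (Γ t).verts) = ↑A1f := by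
    rw [hA1f]; ext a; simp [Finset.mem_filter, Set.mem_setOf_eq]
  have hch : ∀ a : {x // x ∈ A1f}, ∃ t, t ∈ S₁ ∧ (a : V) ∈ (Γ t).verts := by
    intro a
    have h2 : (a : V) ∈ ⋃ t ∈ S₁, (Γ t).verts := (Finset.mem_filter.mp a.2).2
    obtain ⟨t, ht, hv⟩ := Set.mem_iUnion₂.mp h2
    exact ⟨t, ht, hv⟩
  choose φ hφS hφv using hch
  set T := A1f.attach.image φ with hT
  have hcard : A1f.attach.card = ∑ t ∈ T, (A1f.attach.filter (fun x => φ x = t)).card :=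
    Finset.card_eq_sum_card_fiberwise (fun x _ => Finset.mem_image_of_mem φ (Finset.mem_attach _ x))
  have henc : ((((A : Set V) ∩ ⋃ t ∈ S₁, (Γ t).verts).encard : ℕ∞) : ℝ≥0∞)
      = ((A1f.attach.card : ℕ) : ℝ≥0∞) := by
    rw [hA1coe, Set.encard_coe_eq_coe_finsetCard, Finset.card_attach]
    norm_cast
  rw [henc, hcard]
  push_cast
  rw [Finset.mul_sum]
  have hper : ∀ t ∈ T, ENNReal.ofReal r * ((A1f.attach.filter (fun x => φ x = t)).card : ℝ≥0∞)
      ≤ ((Dset t).encard : ℝ≥0∞) := by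
    intro t ht
    obtain ⟨a₀, ha₀T, ha₀⟩ := Finset.mem_image.mp ht
    have htS₁ : t ∈ S₁ := ha₀ ▸ hφS a₀
    set At : Set ((Γ t).verts) := {x | (x : V) ∈ (A : Set V)} with hAt
    have hAtfin : At.Finite :=
      Set.Finite.preimage (Subtype.val_injective.injOn) A.finite_toSet
    have ha₀A : ((a₀ : V) : V) ∈ (A : Set V) := Finset.mem_coe.mpr (Finset.mem_filter.mp a₀.2).1
    have hAtne : At.Nonempty := ⟨⟨(a₀ : V), ha₀ ▸ hφv a₀⟩, ha₀A⟩
    have hfib : ((A1f.attach.filter (fun x => φ x = t)).card : ℕ∞) ≤ At.encard := by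
      rw [hAtfin.encard_eq_coe_toFinset_card]
      norm_cast
      refine Finset.card_le_card_of_injOn
        (fun x => if h : φ x = t then (⟨(x : V), h ▸ hφv x⟩ : (Γ t).verts)
          else ⟨(a₀ : V), ha₀ ▸ hφv a₀⟩) ?_ ?_
      · intro x hx
        have hxt : φ x = t := (Finset.mem_filter.mp hx).2
        simp only [dif_pos hxt]
        exact hAtfin.mem_toFinset.mpr (Finset.mem_coe.mpr (Finset.mem_filter.mp x.2).1)
      · intro x hx y hy hxy
        simp only [Finset.mem_coe, Finset.mem_filter] at hx hy
        simp only [dif_pos hx.2, dif_pos hy.2] at hxy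
        have h2 := congrArg (Subtype.val : ((Γ t).verts) → V) hxy
        exact Subtype.ext h2
    have hexp := expansion (Γ t).coe (h31 t htS₁) hAtfin hAtne
    have hbd : ((vboundary (Γ t).coe At).encard : ℕ∞) ≤ (Dset t).encard := by
      set f : ((Γ t).verts) → V × V := fun w =>
        ((w : V), if h : w ∈ vboundary (Γ t).coe At
          then ((Classical.choose h.2 : (Γ t).verts) : V) else (w : V)) with hf
      have hinj : Set.InjOn f (vboundary (Γ t).coe At) := by
        intro x _ y _ hxy
        exact Subtype.ext (congrArg Prod.fst hxy)
      have himg : f '' (vboundary (Γ t).coe At) ⊆ Dset t := by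
        rintro p ⟨w, hw, rfl⟩
        have hspec := Classical.choose_spec hw.2
        simp only [hf, dif_pos hw]
        exact ⟨hw.1, hspec.1, hspec.2⟩
      calc (vboundary (Γ t).coe At).encard
          = (f '' (vboundary (Γ t).coe At)).encard := (hinj.encard_image).symm
        _ ≤ (Dset t).encard := Set.encard_le_encard himg
    calc ENNReal.ofReal r * ((A1f.attach.filter (fun x => φ x = t)).card : ℝ≥0∞)
        ≤ ENNReal.ofReal r * (At.encard : ℝ≥0∞) := by
          refine mul_le_mul_right ?_ _
          exact_mod_cast ENat.toENNReal_le.mpr hfib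
      _ ≤ ((vboundary (Γ t).coe At).encard : ℝ≥0∞) := hexp
      _ ≤ ((Dset t).encard : ℝ≥0∞) := ENat.toENNReal_le.mpr hbd
  calc ∑ t ∈ T, ENNReal.ofReal r * ((A1f.attach.filter (fun x => φ x = t)).card : ℝ≥0∞)
      ≤ ∑ t ∈ T, ((Dset t).encard : ℝ≥0∞) := Finset.sum_le_sum hper
    _ = ((∑ t ∈ T, (Dset t).encard : ℕ∞) : ℝ≥0∞) := (toENNReal_sum _ _).symm
    _ ≤ (F.encard : ℝ≥0∞) := ENat.toENNReal_le.mpr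
        (sum_encard_le T Dset F (fun t _ => hDsub t) (fun t _ t' _ h => hDdisj t t' h))

private lemma key2 {G : SimpleGraph V} {Γ : ι → G.Subgraph} {S₁ S₂ : Set ι} {R : ℕ} {r : ℝ}
    (hint : ∀ s t : ι, s ≠ t → ∀ x y : V, ¬(Γ s ⊓ Γ t).Adj x y)
    (h32 : ∀ s ∈ S₂, ∀ c : (rest G Γ S₁ R s).ConnectedComponent,
        ENNReal.ofReal r ≤ cheeger ((rest G Γ S₁ R s).induce c.supp))
    (A : Finset V) :
    ENNReal.ofReal r *
        (({a : V | a ∈ A ∧ ∃ s ∈ S₂, (a ∈ (Γ s).verts ∧ a ∉ Ws G Γ S₁ R s)}).encard : ℝ≥0∞) ≤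
      (({p : V × V | p.1 ∉ (A : Set V) ∧ p.2 ∈ (A : Set V) ∧ G.Adj p.1 p.2}).encard : ℝ≥0∞) := by
  classical
  set F : Set (V × V) := {p | p.1 ∉ (A : Set V) ∧ p.2 ∈ (A : Set V) ∧ G.Adj p.1 p.2} with hFdef
  set D2 : ι → Set (V × V) :=
    fun s => {p | p.1 ∉ (A : Set V) ∧ p.2 ∈ (A : Set V) ∧ (Γ s).Adj p.1 p.2 ∧
      p.1 ∉ Ws G Γ S₁ R s} with hD2
  have hDsub : ∀ s, D2 s ⊆ F := by
    rintro s p ⟨h1, h2, h3, h4⟩; exact ⟨h1, h2, h3.adj_sub⟩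
  have hDdisj : ∀ s s', s ≠ s' → Disjoint (D2 s) (D2 s') := by
    intro s s' hne
    rw [Set.disjoint_left]
    rintro p ⟨h1, h2, h3, h4⟩ ⟨h1', h2', h3', h4'⟩
    exact hint s s' hne p.1 p.2 (SimpleGraph.Subgraph.inf_adj.mpr ⟨h3, h3'⟩)
  set A2f : Finset V :=
    A.filter (fun a => ∃ s ∈ S₂, (a ∈ (Γ s).verts ∧ a ∉ Ws G Γ S₁ R s)) with hA2f
  have hA2coe : {a : V | a ∈ A ∧ ∃ s ∈ S₂, (a ∈ (Γ s).verts ∧ a ∉ Ws G Γ S₁ R s)} = ↑A2f := by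
    rw [hA2f]; ext a; simp [Finset.mem_filter, Set.mem_setOf_eq]
  have hch : ∀ a : {x // x ∈ A2f},
      ∃ s, s ∈ S₂ ∧ ((a : V) ∈ (Γ s).verts ∧ (a : V) ∉ Ws G Γ S₁ R s) := by
    intro a
    obtain ⟨s, hs, h⟩ := (Finset.mem_filter.mp a.2).2
    exact ⟨s, hs, h⟩
  choose σ hσS hσvw using hch
  set T := A2f.attach.image σ with hT
  have hcard : A2f.attach.card = ∑ s ∈ T, (A2f.attach.filter (fun x => σ x = s)).card :=
    Finset.card_eq_sum_card_fiberwise (fun x _ => Finset.mem_image_of_mem σ (Finset.mem_attach _ x))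
  have henc : ((({a : V | a ∈ A ∧ ∃ s ∈ S₂, (a ∈ (Γ s).verts ∧ a ∉ Ws G Γ S₁ R s)}).encard : ℕ∞)
      : ℝ≥0∞) = ((A2f.attach.card : ℕ) : ℝ≥0∞) := by
    rw [hA2coe, Set.encard_coe_eq_coe_finsetCard, Finset.card_attach]
    norm_cast
  rw [henc, hcard]
  push_cast
  rw [Finset.mul_sum]
  have hper : ∀ s ∈ T, ENNReal.ofReal r * ((A2f.attach.filter (fun x => σ x = s)).card : ℝ≥0∞)
      ≤ ((D2 s).encard : ℝ≥0∞) := by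
    intro s hs
    obtain ⟨b₀, hb₀T, hb₀⟩ := Finset.mem_image.mp hs
    have hsS₂ : s ∈ S₂ := hb₀ ▸ hσS b₀
    set fib : Finset {x // x ∈ A2f} := A2f.attach.filter (fun x => σ x = s) with hfib
    have hmemfib : ∀ y : {z // z ∈ fib}, σ (y : {x // x ∈ A2f}) = s :=
      fun y => (Finset.mem_filter.mp y.2).2
    have hvert : ∀ y : {z // z ∈ fib}, ((y : {x // x ∈ A2f}) : V) ∈ (Γ s).verts :=
      fun y => (hmemfib y) ▸ (hσvw (y : {x // x ∈ A2f})).1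
    have hnw : ∀ y : {z // z ∈ fib}, ((y : {x // x ∈ A2f}) : V) ∉ Ws G Γ S₁ R s :=
      fun y => (hmemfib y) ▸ (hσvw (y : {x // x ∈ A2f})).2
    set elem : {z // z ∈ fib} → {u : ((Γ s).verts) // (u : V) ∉ Ws G Γ S₁ R s} :=
      fun y => ⟨⟨((y : {x // x ∈ A2f}) : V), hvert y⟩, hnw y⟩ with helem
    set ψ : {z // z ∈ fib} → (rest G Γ S₁ R s).ConnectedComponent :=
      fun y => (rest G Γ S₁ R s).connectedComponentMk (elem y) with hψ
    set T2 := fib.attach.image ψ with hT2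
    have hcard2 : fib.attach.card = ∑ c ∈ T2, (fib.attach.filter (fun y => ψ y = c)).card :=
      Finset.card_eq_sum_card_fiberwise
        (fun y _ => Finset.mem_image_of_mem ψ (Finset.mem_attach _ y))
    set D2c : (rest G Γ S₁ R s).ConnectedComponent → Set (V × V) := fun c =>
      {p | p.1 ∉ (A : Set V) ∧ p.2 ∈ (A : Set V) ∧ (Γ s).Adj p.1 p.2 ∧
        ∃ (h1 : p.1 ∈ (Γ s).verts) (h2 : p.1 ∉ Ws G Γ S₁ R s),
          (rest G Γ S₁ R s).connectedComponentMk ⟨⟨p.1, h1⟩, h2⟩ = c} with hD2c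
    have hD2csub : ∀ c, D2c c ⊆ D2 s := by
      rintro c p ⟨h1, h2, h3, h4, h5, h6⟩
      exact ⟨h1, h2, h3, h5⟩
    have hD2cdisj : ∀ c c', c ≠ c' → Disjoint (D2c c) (D2c c') := by
      intro c c' hne
      rw [Set.disjoint_left]
      rintro p ⟨h1, h2, h3, h4, h5, h6⟩ ⟨h1', h2', h3', h4', h5', h6'⟩
      exact hne (h6 ▸ h6' ▸ rfl)
    have hper2 : ∀ c ∈ T2,
        ENNReal.ofReal r * ((fib.attach.filter (fun y => ψ y = c)).card : ℝ≥0∞)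
          ≤ ((D2c c).encard : ℝ≥0∞) := by
      intro c hc
      obtain ⟨y₀, hy₀T, hy₀⟩ := Finset.mem_image.mp hc
      set Asc : Set (c.supp) := {x | (((x : {u : ((Γ s).verts) // (u : V) ∉ Ws G Γ S₁ R s})
        : ((Γ s).verts)) : V) ∈ (A : Set V)} with hAsc
      have hAscfin : Asc.Finite := by
        have : Asc = (fun x : (c.supp) =>
            (((x : {u : ((Γ s).verts) // (u : V) ∉ Ws G Γ S₁ R s}) : ((Γ s).verts)) : V))
              ⁻¹' (A : Set V) := rfl
        rw [this]
        refine Set.Finite.preimage (Set.injOn_of_injective ?_) A.finite_toSet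
        intro x y hxy
        exact Subtype.ext (Subtype.ext (Subtype.ext hxy))
      have hy₀A : ((y₀ : {x // x ∈ A2f}) : V) ∈ (A : Set V) :=
        Finset.mem_coe.mpr (Finset.mem_filter.mp (y₀ : {x // x ∈ A2f}).2).1
      have hy₀supp : elem y₀ ∈ c.supp :=
        (SimpleGraph.ConnectedComponent.mem_supp_iff _ _).mpr hy₀
      have hAscne : Asc.Nonempty := ⟨⟨elem y₀, hy₀supp⟩, hy₀A⟩
      have hfib2 : ((fib.attach.filter (fun y => ψ y = c)).card : ℕ∞) ≤ Asc.encard := by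
        rw [hAscfin.encard_eq_coe_toFinset_card]
        norm_cast
        refine Finset.card_le_card_of_injOn
          (fun y => if h : ψ y = c
            then (⟨elem y, (SimpleGraph.ConnectedComponent.mem_supp_iff _ _).mpr h⟩ : (c.supp))
            else ⟨elem y₀, hy₀supp⟩) ?_ ?_
        · intro y hy
          have hyc : ψ y = c := (Finset.mem_filter.mp hy).2
          simp only [dif_pos hyc]
          refine hAscfin.mem_toFinset.mpr ?_
          exact Finset.mem_coe.mpr (Finset.mem_filter.mp (y : {x // x ∈ A2f}).2).1
        · intro y hy z hz hyz
          simp only [Finset.mem_coe, Finset.mem_filter] at hy hz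
          simp only [dif_pos hy.2, dif_pos hz.2] at hyz
          have h2 := congrArg (fun q : (c.supp) =>
            (((q : {u : ((Γ s).verts) // (u : V) ∉ Ws G Γ S₁ R s}) : ((Γ s).verts)) : V)) hyz
          exact Subtype.ext (Subtype.ext h2)
      have hexp := expansion ((rest G Γ S₁ R s).induce c.supp) (h32 s hsS₂ c) hAscfin hAscne
      have hbd : ((vboundary ((rest G Γ S₁ R s).induce c.supp) Asc).encard : ℕ∞)
          ≤ (D2c c).encard := by
        set f : (c.supp) → V × V := fun w =>
          ((((w : {u : ((Γ s).verts) // (u : V) ∉ Ws G Γ S₁ R s}) : ((Γ s).verts)) : V),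
            if h : w ∈ vboundary ((rest G Γ S₁ R s).induce c.supp) Asc
            then ((((Classical.choose h.2 : (c.supp))
              : {u : ((Γ s).verts) // (u : V) ∉ Ws G Γ S₁ R s}) : ((Γ s).verts)) : V)
            else (((w : {u : ((Γ s).verts) // (u : V) ∉ Ws G Γ S₁ R s}) : ((Γ s).verts)) : V))
          with hf
        have hinj : Set.InjOn f (vboundary ((rest G Γ S₁ R s).induce c.supp) Asc) := by
          intro x _ y _ hxy
          have h2 := congrArg Prod.fst hxy
          exact Subtype.ext (Subtype.ext (Subtype.ext h2))
        have himg : f '' (vboundary ((rest G Γ S₁ R s).induce c.supp) Asc) ⊆ D2c c := by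
          rintro p ⟨w, hw, rfl⟩
          have hspec := Classical.choose_spec hw.2
          simp only [hf, dif_pos hw]
          refine ⟨hw.1, hspec.1, ?_, ?_⟩
          · exact hspec.2
          · refine ⟨w.1.1.2, w.1.2, ?_⟩
            have heq : (⟨⟨w.1.1.1, w.1.1.2⟩, w.1.2⟩
                : {u : ((Γ s).verts) // (u : V) ∉ Ws G Γ S₁ R s}) = w.1 :=
              Subtype.ext (Subtype.ext rfl)
            rw [heq]
            exact (SimpleGraph.ConnectedComponent.mem_supp_iff _ _).mp w.2
        calc (vboundary ((rest G Γ S₁ R s).induce c.supp) Asc).encard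
            = (f '' (vboundary ((rest G Γ S₁ R s).induce c.supp) Asc)).encard :=
              (hinj.encard_image).symm
          _ ≤ (D2c c).encard := Set.encard_le_encard himg
      calc ENNReal.ofReal r * ((fib.attach.filter (fun y => ψ y = c)).card : ℝ≥0∞)
          ≤ ENNReal.ofReal r * (Asc.encard : ℝ≥0∞) := by
            refine mul_le_mul_right ?_ _
            exact_mod_cast ENat.toENNReal_le.mpr hfib2
        _ ≤ ((vboundary ((rest G Γ S₁ R s).induce c.supp) Asc).encard : ℝ≥0∞) := hexp
        _ ≤ ((D2c c).encard : ℝ≥0∞) := ENat.toENNReal_le.mpr hbd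
    calc ENNReal.ofReal r * ((fib.card : ℕ) : ℝ≥0∞)
        = ENNReal.ofReal r * ((fib.attach.card : ℕ) : ℝ≥0∞) := by rw [Finset.card_attach]
      _ = ∑ c ∈ T2, ENNReal.ofReal r
            * ((fib.attach.filter (fun y => ψ y = c)).card : ℝ≥0∞) := by
          rw [hcard2]; push_cast; rw [Finset.mul_sum]
      _ ≤ ∑ c ∈ T2, ((D2c c).encard : ℝ≥0∞) := Finset.sum_le_sum hper2
      _ = ((∑ c ∈ T2, (D2c c).encard : ℕ∞) : ℝ≥0∞) := (toENNReal_sum _ _).symm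
      _ ≤ ((D2 s).encard : ℝ≥0∞) := ENat.toENNReal_le.mpr
          (sum_encard_le T2 D2c (D2 s) (fun c _ => hD2csub c) (fun c _ c' _ h => hD2cdisj c c' h))
  calc ∑ s ∈ T, ENNReal.ofReal r * ((A2f.attach.filter (fun x => σ x = s)).card : ℝ≥0∞)
      ≤ ∑ s ∈ T, ((D2 s).encard : ℝ≥0∞) := Finset.sum_le_sum hper
    _ = ((∑ s ∈ T, (D2 s).encard : ℕ∞) : ℝ≥0∞) := (toENNReal_sum _ _).symm
    _ ≤ (F.encard : ℝ≥0∞) := ENat.toENNReal_le.mpr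
        (sum_encard_le T D2 F (fun s _ => hDsub s) (fun s _ s' _ h => hDdisj s s' h))

private lemma key3 {G : SimpleGraph V} {Γ : ι → G.Subgraph} {S₁ S₂ : Set ι} {R : ℕ} {μ : ℕ}
    (hμ : ∀ x : V, (G.neighborSet x).encard ≤ μ) (A : Finset V)
    (hBfin : (vboundary G (A : Set V)).Finite) :
    ({a : V | a ∈ A ∧ ∃ s ∈ S₂, a ∈ Ws G Γ S₁ R s}).encard ≤
      (∑ i ∈ Finset.range (R+1), (μ : ℕ∞) ^ i) *
        ((vboundary G (A : Set V)) ∪ ((A : Set V) ∩ ⋃ t ∈ S₁, (Γ t).verts)).encard := by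
  classical
  set C : Set V := (vboundary G (A : Set V)) ∪ ((A : Set V) ∩ ⋃ t ∈ S₁, (Γ t).verts) with hC
  have hsub : {a : V | a ∈ A ∧ ∃ s ∈ S₂, a ∈ Ws G Γ S₁ R s} ⊆ gball G C R := by
    rintro a ⟨haA, s, hsS₂, haW⟩
    obtain ⟨hu, w, hwV, hreach, hdist⟩ := haW
    obtain ⟨p, hp⟩ := hreach.exists_walk_length_eq_dist
    have hpl : p.length ≤ R := by omega
    have hpGl : (p.map (Γ s).hom : G.Walk a (w : V)).length ≤ R := by
      rw [SimpleGraph.Walk.length_map]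
      exact hpl
    by_cases hwA : (w : V) ∈ (A : Set V)
    · exact ⟨(w : V), Or.inr ⟨hwA, hwV.2⟩, p.map (Γ s).hom, hpGl⟩
    · obtain ⟨b', hb', q, hq⟩ := exists_boundary (p.map (Γ s).hom : G.Walk a (w : V))
        (Finset.mem_coe.mpr haA) hwA
      exact ⟨b', Or.inl hb', q, hq.trans hpGl⟩
  have hCfin : C.Finite := hBfin.union (A.finite_toSet.inter_of_left _)
  calc ({a : V | a ∈ A ∧ ∃ s ∈ S₂, a ∈ Ws G Γ S₁ R s}).encard
      ≤ (gball G C R).encard := Set.encard_le_encard hsub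
    _ ≤ (∑ i ∈ Finset.range (R+1), (μ : ℕ∞) ^ i) * C.encard := encard_gball_le hμ hCfin R

/-- If a connected `μ`-uniform graph `Γ` has an `(R,r)`-decomposition
`{Γ_s}_{s ∈ S}`, then `h(Γ) ≥ r²(μ-1) / ((μ^{R+1}-1)(μ+r)² + 2rμ(μ-1))`. -/
theorem cheeger_ge_of_decomposition (G : SimpleGraph V) (hconn : G.Connected)
    (μ : ℕ) (hμ : ∀ x : V, (G.neighborSet x).encard ≤ μ)
    (R : ℕ) (hR : 0 < R) (r : ℝ) (hr : 0 < r)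
    (Γ : ι → G.Subgraph)
    -- (1) the subgraphs cover Γ
    (hcover : (⨆ s, Γ s) = ⊤)
    -- (2) pairwise intersections are (possibly empty) sets of vertices, and
    -- `Γ_s ∖ Γ_t ≠ ∅` for `s ≠ t`
    (hint : ∀ s t : ι, s ≠ t → (∀ x y : V, ¬(Γ s ⊓ Γ t).Adj x y) ∧ ¬Γ s ≤ Γ t)
    -- (3) a partition {S₁, S₂} of the index set
    (S₁ S₂ : Set ι) (hpart : S₁ ∪ S₂ = Set.univ) (hdisj : S₁ ∩ S₂ = ∅)
    -- (3.1)
    (hS₁ : S₁.Nonempty) (h31 : ∀ s ∈ S₁, ENNReal.ofReal r ≤ cheeger (Γ s).coe)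
    -- (3.2)
    (h32 : ∀ s ∈ S₂, (Vs G Γ S₁ s).Nonempty ∧
      ∀ c : (rest G Γ S₁ R s).ConnectedComponent,
        ENNReal.ofReal r ≤ cheeger ((rest G Γ S₁ R s).induce c.supp)) :
    ENNReal.ofReal (r ^ 2 * ((μ : ℝ) - 1) /
        (((μ : ℝ) ^ (R + 1) - 1) * ((μ : ℝ) + r) ^ 2 + 2 * r * (μ : ℝ) * ((μ : ℝ) - 1))) ≤
      cheeger G := by
  classical
  have hverts : ∀ v : V, ∃ s, v ∈ (Γ s).verts := by
    intro v
    have hv : v ∈ (⨆ s, Γ s).verts := by rw [hcover]; trivial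
    rw [SimpleGraph.Subgraph.verts_iSup] at hv
    exact Set.mem_iUnion.mp hv
  rcases show μ = 0 ∨ μ = 1 ∨ 2 ≤ μ by omega with h0 | h1 | h2
  · -- `μ = 0` is impossible
    exfalso
    have hnoadj : ∀ x y : V, ¬ G.Adj x y := by
      intro x y hxy
      have h1 := hμ x
      rw [h0] at h1
      simp only [Nat.cast_zero, nonpos_iff_eq_zero, Set.encard_eq_zero] at h1
      exact Set.eq_empty_iff_forall_notMem.mp h1 y hxy
    have hv1 : ∀ s ∈ S₁, (Γ s).verts = ∅ := by
      intro s hs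
      by_contra hne
      obtain ⟨x, hx⟩ := Set.nonempty_iff_ne_empty.mpr hne
      have hbd : vboundary (Γ s).coe (↑({⟨x, hx⟩} : Finset ((Γ s).verts))) = ∅ := by
        rw [Set.eq_empty_iff_forall_notMem]
        rintro w ⟨hw, a, ha, hadj⟩
        exact hnoadj _ _ hadj.adj_sub
      have hch : cheeger (Γ s).coe ≤ eratio (Γ s).coe {⟨x, hx⟩} :=
        iInf₂_le _ ⟨⟨x, hx⟩, Finset.mem_singleton_self _⟩
      rw [eratio, hbd] at hch
      simp only [Set.encard_empty, ENat.toENNReal_zero, ENNReal.zero_div,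
        nonpos_iff_eq_zero] at hch
      have := le_trans (h31 s hs) (le_of_eq hch)
      rw [nonpos_iff_eq_zero, ENNReal.ofReal_eq_zero] at this
      linarith
    obtain ⟨v⟩ := hconn.nonempty
    obtain ⟨s, hvs⟩ := hverts v
    have hs12 : s ∈ S₁ ∪ S₂ := hpart ▸ Set.mem_univ s
    cases hs12 with
    | inl h => rw [hv1 s h] at hvs; exact hvs
    | inr h =>
      obtain ⟨z, hz⟩ := (h32 s h).1
      obtain ⟨t, ht, hzt⟩ := Set.mem_iUnion₂.mp hz.2
      rw [hv1 t ht] at hzt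
      exact hzt
  · -- `μ = 1`: the constant is zero
    subst h1
    simp only [Nat.cast_one, sub_self, mul_zero, zero_div, ENNReal.ofReal_zero]
    exact zero_le
  · -- main case `2 ≤ μ`
    rw [cheeger]
    refine le_iInf fun A => le_iInf fun hA => ?_
    by_cases hBtop : (vboundary G (A : Set V)).encard = ⊤
    · rw [eratio, hBtop, ENat.toENNReal_top,
        ENNReal.top_div_of_ne_top (ENNReal.natCast_ne_top _)]
      exact le_top
    · have hBfin : (vboundary G (A : Set V)).Finite := Set.encard_ne_top_iff.mp hBtop
      -- names for the quantities involved
      set b : ℝ≥0∞ := ((vboundary G (A : Set V)).encard : ℝ≥0∞) with hbdef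
      set x1 : ℝ≥0∞ := ((((A : Set V) ∩ ⋃ t ∈ S₁, (Γ t).verts)).encard : ℝ≥0∞) with hx1def
      set x2 : ℝ≥0∞ :=
        (({a : V | a ∈ A ∧ ∃ s ∈ S₂, (a ∈ (Γ s).verts ∧ a ∉ Ws G Γ S₁ R s)}).encard : ℝ≥0∞)
        with hx2def
      set x3 : ℝ≥0∞ := (({a : V | a ∈ A ∧ ∃ s ∈ S₂, a ∈ Ws G Γ S₁ R s}).encard : ℝ≥0∞)
        with hx3def
      set ρ : ℝ≥0∞ := ENNReal.ofReal r with hρdef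
      set m : ℝ≥0∞ := (μ : ℝ≥0∞) with hmdef
      set βe : ℝ≥0∞ := ∑ i ∈ Finset.range (R+1), (μ : ℝ≥0∞) ^ i with hβedef
      -- the bound on the edge set F
      have hFb : (({p : V × V | p.1 ∉ (A : Set V) ∧ p.2 ∈ (A : Set V) ∧ G.Adj p.1 p.2}).encard
          : ℝ≥0∞) ≤ m * b := by
        have := encard_F_le hμ A hBfin
        calc (({p : V × V | p.1 ∉ (A : Set V) ∧ p.2 ∈ (A : Set V) ∧ G.Adj p.1 p.2}).encard
            : ℝ≥0∞) ≤ (((μ : ℕ∞) * (vboundary G (A : Set V)).encard : ℕ∞) : ℝ≥0∞) :=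
              ENat.toENNReal_le.mpr this
          _ = m * b := by rw [ENat.toENNReal_mul, ENat.toENNReal_coe]
      -- the three key estimates
      have hkey1 : ρ * x1 ≤ m * b :=
        le_trans (key1 h31 (fun s t h => (hint s t h).1) A) hFb
      have hkey2 : ρ * x2 ≤ m * b :=
        le_trans (key2 (fun s t h => (hint s t h).1) (fun s hs => (h32 s hs).2) A) hFb
      have hkey3 : x3 ≤ βe * (b + x1) := by
        have h := key3 (Γ := Γ) (S₁ := S₁) (S₂ := S₂) (R := R) hμ A hBfin
        calc x3 ≤ (((∑ i ∈ Finset.range (R+1), (μ : ℕ∞) ^ i) *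
            ((vboundary G (A : Set V)) ∪ ((A : Set V) ∩ ⋃ t ∈ S₁, (Γ t).verts)).encard : ℕ∞)
              : ℝ≥0∞) := ENat.toENNReal_le.mpr h
          _ = (((∑ i ∈ Finset.range (R+1), (μ : ℕ∞) ^ i : ℕ∞)) : ℝ≥0∞) *
              ((((vboundary G (A : Set V)) ∪ ((A : Set V) ∩ ⋃ t ∈ S₁, (Γ t).verts)).encard : ℕ∞)
                : ℝ≥0∞) := by rw [ENat.toENNReal_mul]
          _ ≤ βe * (b + x1) := by
              refine mul_le_mul ?_ ?_ zero_le zero_le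
              · rw [toENNReal_sum]
                refine le_of_eq (Finset.sum_congr rfl (fun i _ => ?_))
                rw [ENat.toENNReal_pow]
                norm_cast
              · calc ((((vboundary G (A : Set V)) ∪
                    ((A : Set V) ∩ ⋃ t ∈ S₁, (Γ t).verts)).encard : ℕ∞) : ℝ≥0∞)
                    ≤ (((vboundary G (A : Set V)).encard +
                      ((A : Set V) ∩ ⋃ t ∈ S₁, (Γ t).verts).encard : ℕ∞) : ℝ≥0∞) :=
                      ENat.toENNReal_le.mpr (Set.encard_union_le _ _)
                  _ = b + x1 := by rw [ENat.toENNReal_add]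
      -- covering `A` by the three pieces
      have hcov : ((A.card : ℕ) : ℝ≥0∞) ≤ x1 + x2 + x3 := by
        have hsub : (A : Set V) ⊆
            ((((A : Set V) ∩ ⋃ t ∈ S₁, (Γ t).verts)) ∪
              {a : V | a ∈ A ∧ ∃ s ∈ S₂, (a ∈ (Γ s).verts ∧ a ∉ Ws G Γ S₁ R s)}) ∪
              {a : V | a ∈ A ∧ ∃ s ∈ S₂, a ∈ Ws G Γ S₁ R s} := by
          intro a ha
          by_cases haU : a ∈ ⋃ t ∈ S₁, (Γ t).verts
          · exact Or.inl (Or.inl ⟨ha, haU⟩)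
          · obtain ⟨s, hs⟩ := hverts a
            have hs2 : s ∈ S₂ := by
              have hmem : s ∈ S₁ ∪ S₂ := hpart ▸ Set.mem_univ s
              cases hmem with
              | inl h => exact absurd (Set.mem_biUnion h hs) haU
              | inr h => exact h
            by_cases hw : a ∈ Ws G Γ S₁ R s
            · exact Or.inr ⟨Finset.mem_coe.mp ha, s, hs2, hw⟩
            · exact Or.inl (Or.inr ⟨Finset.mem_coe.mp ha, s, hs2, hs, hw⟩)
        have h1 : ((A : Set V)).encard ≤
            (((A : Set V) ∩ ⋃ t ∈ S₁, (Γ t).verts)).encard +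
            ({a : V | a ∈ A ∧ ∃ s ∈ S₂, (a ∈ (Γ s).verts ∧ a ∉ Ws G Γ S₁ R s)}).encard +
            ({a : V | a ∈ A ∧ ∃ s ∈ S₂, a ∈ Ws G Γ S₁ R s}).encard := by
          refine le_trans (Set.encard_le_encard hsub) ?_
          refine le_trans (Set.encard_union_le _ _) ?_
          exact add_le_add_left (Set.encard_union_le _ _) _
        have h2 : (((A : Set V)).encard : ℝ≥0∞) ≤ x1 + x2 + x3 := by
          refine le_trans (ENat.toENNReal_le.mpr h1) ?_
          rw [ENat.toENNReal_add, ENat.toENNReal_add]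
        rwa [Set.encard_coe_eq_coe_finsetCard, ENat.toENNReal_coe] at h2
      -- main chain
      have hmain : ρ^2 * (x1 + x2 + x3) ≤ (ρ * (2*m + βe*(ρ + m))) * b := by
        have e1 : ρ^2 * x1 ≤ ρ * (m * b) := by
          calc ρ^2 * x1 = ρ * (ρ * x1) := by ring
            _ ≤ ρ * (m * b) := mul_le_mul_right hkey1 _
        have e2 : ρ^2 * x2 ≤ ρ * (m * b) := by
          calc ρ^2 * x2 = ρ * (ρ * x2) := by ring
            _ ≤ ρ * (m * b) := mul_le_mul_right hkey2 _
        have e3 : ρ^2 * x3 ≤ ρ^2 * βe * b + ρ * βe * (m * b) := by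
          calc ρ^2 * x3 ≤ ρ^2 * (βe * (b + x1)) := mul_le_mul_right hkey3 _
            _ = ρ^2 * βe * b + ρ * βe * (ρ * x1) := by ring
            _ ≤ ρ^2 * βe * b + ρ * βe * (m * b) :=
                add_le_add_right (mul_le_mul_right hkey1 _) _
        calc ρ^2 * (x1 + x2 + x3) = ρ^2 * x1 + ρ^2 * x2 + ρ^2 * x3 := by ring
          _ ≤ ρ * (m * b) + ρ * (m * b) + (ρ^2 * βe * b + ρ * βe * (m * b)) :=
              add_le_add (add_le_add e1 e2) e3
          _ = (ρ * (2*m + βe*(ρ + m))) * b := by ring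
      -- the coefficient bound
      have hμR : (2:ℝ) ≤ (μ : ℝ) := by exact_mod_cast h2
      have hone : (1:ℝ) ≤ (μ:ℝ) ^ (R+1) := one_le_pow₀ (by linarith)
      have hden : (0:ℝ) ≤ ((μ : ℝ) ^ (R + 1) - 1) * ((μ : ℝ) + r) ^ 2 +
          2 * r * (μ : ℝ) * ((μ : ℝ) - 1) := by
        have t1 : (0:ℝ) ≤ ((μ:ℝ)^(R+1) - 1) * ((μ:ℝ)+r)^2 :=
          mul_nonneg (by linarith) (sq_nonneg _)
        have t2 : (0:ℝ) ≤ 2*r*(μ:ℝ)*((μ:ℝ)-1) :=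
          mul_nonneg (by positivity) (by linarith)
        linarith
      have hc0 : (0:ℝ) ≤ r ^ 2 * ((μ : ℝ) - 1) /
          (((μ : ℝ) ^ (R + 1) - 1) * ((μ : ℝ) + r) ^ 2 + 2 * r * (μ : ℝ) * ((μ : ℝ) - 1)) :=
        div_nonneg (mul_nonneg (sq_nonneg _) (by linarith)) hden
      have hKeq : ρ * (2*m + βe*(ρ + m)) =
          ENNReal.ofReal (r * (2 * (μ:ℝ) + (∑ i ∈ Finset.range (R+1), (μ:ℝ) ^ i) * (r + (μ:ℝ))))
          := by
        have hβr : βe = ENNReal.ofReal (∑ i ∈ Finset.range (R+1), (μ:ℝ) ^ i) := by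
          rw [ENNReal.ofReal_sum_of_nonneg (fun i _ => by positivity)]
          refine Finset.sum_congr rfl (fun i _ => ?_)
          rw [ENNReal.ofReal_pow (by positivity), ENNReal.ofReal_natCast]
        have hmr : m = ENNReal.ofReal (μ:ℝ) := (ENNReal.ofReal_natCast μ).symm
        rw [ENNReal.ofReal_mul hr.le, ENNReal.ofReal_add (by positivity) (by positivity),
          ENNReal.ofReal_mul (by positivity : (0:ℝ) ≤ (∑ i ∈ Finset.range (R+1), (μ:ℝ) ^ i)),
          ENNReal.ofReal_add hr.le (by positivity), hρdef, hβr, hmr,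
          ENNReal.ofReal_mul (by norm_num : (0:ℝ) ≤ (2:ℝ))]
        norm_num
      have hK : ENNReal.ofReal (r ^ 2 * ((μ : ℝ) - 1) /
          (((μ : ℝ) ^ (R + 1) - 1) * ((μ : ℝ) + r) ^ 2 + 2 * r * (μ : ℝ) * ((μ : ℝ) - 1))) *
            (ρ * (2*m + βe*(ρ + m))) ≤ ρ^2 := by
        rw [hKeq, ← ENNReal.ofReal_mul hc0]
        rw [hρdef, ← ENNReal.ofReal_pow hr.le]
        exact ENNReal.ofReal_le_ofReal (real_key hμR hr)
      -- conclude
      rw [eratio]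
      rw [ENNReal.le_div_iff_mul_le (Or.inl (Nat.cast_ne_zero.mpr hA.card_pos.ne'))
        (Or.inl (ENNReal.natCast_ne_top _))]
      have hρ0 : (ρ^2) ≠ 0 := pow_ne_zero _ (ENNReal.ofReal_pos.mpr hr).ne'
      have hρt : (ρ^2) ≠ ⊤ := by
        rw [hρdef]; exact (ENNReal.pow_ne_top ENNReal.ofReal_ne_top)
      rw [← ENNReal.mul_le_mul_iff_left hρ0 hρt]
      calc ENNReal.ofReal (r ^ 2 * ((μ : ℝ) - 1) /
            (((μ : ℝ) ^ (R + 1) - 1) * ((μ : ℝ) + r) ^ 2 + 2 * r * (μ : ℝ) * ((μ : ℝ) - 1))) *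
              (A.card : ℝ≥0∞) * ρ^2
          = ENNReal.ofReal (r ^ 2 * ((μ : ℝ) - 1) /
            (((μ : ℝ) ^ (R + 1) - 1) * ((μ : ℝ) + r) ^ 2 + 2 * r * (μ : ℝ) * ((μ : ℝ) - 1))) *
              (ρ^2 * ((A.card : ℕ) : ℝ≥0∞)) := by push_cast; ring
        _ ≤ ENNReal.ofReal (r ^ 2 * ((μ : ℝ) - 1) /
            (((μ : ℝ) ^ (R + 1) - 1) * ((μ : ℝ) + r) ^ 2 + 2 * r * (μ : ℝ) * ((μ : ℝ) - 1))) *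
              (ρ^2 * (x1 + x2 + x3)) := mul_le_mul_right (mul_le_mul_right hcov _) _
        _ ≤ ENNReal.ofReal (r ^ 2 * ((μ : ℝ) - 1) /
            (((μ : ℝ) ^ (R + 1) - 1) * ((μ : ℝ) + r) ^ 2 + 2 * r * (μ : ℝ) * ((μ : ℝ) - 1))) *
              ((ρ * (2*m + βe*(ρ + m))) * b) := mul_le_mul_right hmain _
        _ = (ENNReal.ofReal (r ^ 2 * ((μ : ℝ) - 1) /
            (((μ : ℝ) ^ (R + 1) - 1) * ((μ : ℝ) + r) ^ 2 + 2 * r * (μ : ℝ) * ((μ : ℝ) - 1))) *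
              (ρ * (2*m + βe*(ρ + m)))) * b := by ring
        _ ≤ ρ^2 * b := mul_le_mul_left hK _
        _ = b * ρ^2 := by ring

end TreePaper
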